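/- Let K be a nonempty closed convex cone in a real Hilbert space H with polar cone K⊖, let ρ₁, ρ₂ > 0, set C = K ∩ B(0, ρ₁) and D = K⊖ ∩ B(0, ρ₂). Then ⟨P_C x, P_D x⟩ = 0 for every x ∈ H. -/

import Mathlib

open RealInnerProductSpace Pointwise

variable {H : Type*} [NormedAddCommGroup H] [InnerProductSpace ℝ H] [CompleteSpace H]

/-- `P` is the metric projection (nearest-point map) onto `C`. -/
def IsProjOn (C : Set H) (P : H → H) : Prop :=
  ∀ x, P x ∈ C ∧ ∀ y ∈ C, ‖x - P x‖ ≤ ‖x - y‖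

/-- The polar cone of a set. -/
def polarCone (C : Set H) : Set H := {u | ∀ c ∈ C, ⟪c, u⟫ ≤ 0}

lemma expand_aux (x p y : H) (t : ℝ) (hb : ⟪x - p, p⟫ = 0) :
    ⟪x - t • p, y - t • p⟫ = ⟪x - p, y⟫ + (1 - t) * (⟪p, y⟫ - t * ⟪p, p⟫) := by
  have hb' : ⟪x, p⟫ = ⟪p, p⟫ := by rw [inner_sub_left] at hb; linarith
  simp only [inner_sub_left, inner_sub_right, real_inner_smul_left, real_inner_smul_right]
  linear_combination (-t) * hb'

lemma proj_eq_of_vi {C : Set H} (hcv : Convex ℝ C) {P : H → H} (hP : IsProjOn C P)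
    (x c : H) (hc : c ∈ C) (hVI : ∀ y ∈ C, ⟪x - c, y - c⟫ ≤ 0) : P x = c := by
  obtain ⟨hmem, hmin⟩ := hP x
  have hbdd : BddBelow (Set.range fun w : C => ‖x - (w : H)‖) := by
    refine ⟨0, ?_⟩
    rintro a ⟨w, rfl⟩
    positivity
  have : Nonempty C := ⟨⟨P x, hmem⟩⟩
  have hinf : ‖x - P x‖ = ⨅ w : C, ‖x - w‖ :=
    le_antisymm (le_ciInf fun w => hmin w w.2) (ciInf_le hbdd ⟨P x, hmem⟩)
  have hVI2 := (norm_eq_iInf_iff_real_inner_le_zero hcv hmem).mp hinf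
  have h1 := hVI (P x) hmem
  have h2 := hVI2 c hc
  have e : ⟪P x - c, P x - c⟫ = ⟪x - c, P x - c⟫ + ⟪x - P x, c - P x⟫ := by
    simp only [inner_sub_left, inner_sub_right]
    ring
  have : P x - c = 0 := real_inner_self_nonpos.mp (by linarith)
  exact sub_eq_zero.mp this

lemma scaled_proj {S : Set H} (hScv : Convex ℝ S) (hScone : ∀ c ∈ S, ∀ t : ℝ, 0 ≤ t → t • c ∈ S)
    {ρ : ℝ} (hρ : 0 < ρ) {P : H → H} (hP : IsProjOn (S ∩ Metric.closedBall 0 ρ) P)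
    (x p : H) (hp : p ∈ S) (horth : ⟪x - p, p⟫ = 0) (hpol : ∀ y ∈ S, ⟪x - p, y⟫ ≤ 0) :
    ∃ t : ℝ, 0 ≤ t ∧ P x = t • p := by
  set t : ℝ := if ‖p‖ ≤ ρ then (1 : ℝ) else ρ / ‖p‖ with ht
  have ht0 : 0 ≤ t := by
    rw [ht]; split_ifs with h
    · norm_num
    · positivity
  refine ⟨t, ht0, ?_⟩
  have hcv : Convex ℝ (S ∩ Metric.closedBall 0 ρ) :=
    hScv.inter (convex_closedBall _ _)
  have hmem : t • p ∈ S ∩ Metric.closedBall 0 ρ := by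
    refine ⟨hScone p hp t ht0, ?_⟩
    rw [Metric.mem_closedBall, dist_zero_right, norm_smul, Real.norm_eq_abs,
      abs_of_nonneg ht0, ht]
    split_ifs with h
    · simpa using h
    · push_neg at h
      rw [div_mul_cancel₀ _ (lt_trans hρ h).ne']
  refine proj_eq_of_vi hcv hP x _ hmem ?_
  rintro y ⟨hyS, hyB⟩
  rw [Metric.mem_closedBall, dist_zero_right] at hyB
  rw [expand_aux x p y t horth]
  have h1 : ⟪x - p, y⟫ ≤ 0 := hpol y hyS
  have h2 : (1 - t) * (⟪p, y⟫ - t * ⟪p, p⟫) ≤ 0 := by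
    rw [ht]
    split_ifs with h
    · norm_num
    · push_neg at h
      have hp0 : 0 < ‖p‖ := lt_trans hρ h
      have ht1 : ρ / ‖p‖ ≤ 1 := by
        rw [div_le_one hp0]; linarith
      have hiy : ⟪p, y⟫ ≤ ‖p‖ * ρ := by
        calc ⟪p, y⟫ ≤ ‖p‖ * ‖y‖ := real_inner_le_norm p y
        _ ≤ ‖p‖ * ρ := by nlinarith
      have hpp : ρ / ‖p‖ * ⟪p, p⟫ = ρ * ‖p‖ := by
        rw [real_inner_self_eq_norm_sq]
        field_simp
      rw [hpp]
      nlinarith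
  linarith

theorem stmt9 (K : Set H)
    (hne : K.Nonempty) (hcl : IsClosed K) (hcv : Convex ℝ K)
    (hcone : ∀ c ∈ K, ∀ t : ℝ, 0 ≤ t → t • c ∈ K)
    (ρ₁ ρ₂ : ℝ) (hρ₁ : 0 < ρ₁) (hρ₂ : 0 < ρ₂)
    (Pc Pd : H → H)
    (hPc : IsProjOn (K ∩ Metric.closedBall 0 ρ₁) Pc)
    (hPd : IsProjOn (polarCone K ∩ Metric.closedBall 0 ρ₂) Pd)
    (x : H) :
    ⟪Pc x, Pd x⟫ = 0 := by
  obtain ⟨k, hk⟩ := hne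
  have h0K : (0 : H) ∈ K := by simpa using hcone k hk 0 le_rfl
  -- projection p of x onto K
  obtain ⟨p, hpK, hpinf⟩ :=
    exists_norm_eq_iInf_of_complete_convex ⟨k, hk⟩ (hcl.isComplete) hcv x
  have hVIp := (norm_eq_iInf_iff_real_inner_le_zero hcv hpK).mp hpinf
  have horth : ⟪x - p, p⟫ = 0 := by
    have h1 := hVIp 0 h0K
    have h2 := hVIp ((2 : ℝ) • p) (hcone p hpK 2 (by norm_num))
    have e1 : (0 : H) - p = -p := by abel
    have e2 : (2 : ℝ) • p - p = p := by
      rw [two_smul]; abel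
    rw [e1, inner_neg_right] at h1
    rw [e2] at h2
    linarith
  have hqpol : ∀ y ∈ K, ⟪x - p, y⟫ ≤ 0 := by
    intro y hy
    have := hVIp y hy
    rw [inner_sub_right, horth] at this
    linarith
  have hqmem : x - p ∈ polarCone K := fun c hc => by
    rw [real_inner_comm]; exact hqpol c hc
  -- polar cone properties
  have hpolcv : Convex ℝ (polarCone K) := by
    intro u hu v hv a b ha hb hab
    intro c hc
    rw [inner_add_right, real_inner_smul_right, real_inner_smul_right]
    nlinarith [hu c hc, hv c hc]
  have hpolcone : ∀ c ∈ polarCone K, ∀ t : ℝ, 0 ≤ t → t • c ∈ polarCone K := by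
    intro u hu t ht c hc
    rw [real_inner_smul_right]
    exact mul_nonpos_of_nonneg_of_nonpos ht (hu c hc)
  -- orthogonality data for the polar-cone projection
  have horth' : ⟪x - (x - p), x - p⟫ = 0 := by
    have e : x - (x - p) = p := by abel
    rw [e, ← horth, real_inner_comm]
  have hppol : ∀ z ∈ polarCone K, ⟪x - (x - p), z⟫ ≤ 0 := by
    intro z hz
    have e : x - (x - p) = p := by abel
    rw [e]
    exact hz p hpK
  obtain ⟨t, ht0, htc⟩ := scaled_proj hcv hcone hρ₁ hPc x p hpK horth hqpol
  obtain ⟨s, hs0, hsd⟩ := scaled_proj hpolcv hpolcone hρ₂ hPd x (x - p) hqmem horth' hppol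
  rw [htc, hsd, real_inner_smul_left, real_inner_smul_right]
  have : ⟪p, x - p⟫ = 0 := by rw [← horth, real_inner_comm]
  rw [this]
  ring
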